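/- In the naïve randomized sink mechanism with two alternatives, for any valuation profile, the number of agents i such that removing agent i changes the efficient alternative away from the overall efficient alternative AND agent i's valuation gap between the two alternatives exceeds M − δ (for all δ up to some threshold), is at most ⌈n/2⌉. More precisely: at most ⌈n/2⌉ agents can simultaneously be pivotal with valuation gap arbitrarily close to M. -/

import Mathlib

open Finset Classical

/-- for sufficiently small `ε`, at most `⌈n/2⌉` agents can be
pivotal for the efficient alternative with valuation gap exceeding `M - ε`. -/
theorem stmt_4 (n : ℕ) (M : ℝ) (hM : 0 < M) :
    ∃ ε₀ > (0:ℝ), ∀ ε : ℝ, 0 < ε → ε < ε₀ →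
      ∀ v : Fin n → Bool → ℝ,
        (∀ i x, v i x ∈ Set.Ioo (-(M/2)) (M/2)) →
        (∑ j, v j false ≤ ∑ j, v j true) →
        (Finset.univ.filter (fun i =>
            (∑ j ∈ Finset.univ.erase i, v j true < ∑ j ∈ Finset.univ.erase i, v j false)
            ∧ M - ε < v i true - v i false)).card ≤ (n + 1) / 2 := by
  refine ⟨M / (n + 1), by positivity, ?_⟩
  intro ε hε hεM v hv hEff
  by_contra hcard
  push_neg at hcard
  set S := Finset.univ.filter (fun i : Fin n =>
      (∑ j ∈ Finset.univ.erase i, v j true < ∑ j ∈ Finset.univ.erase i, v j false)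
      ∧ M - ε < v i true - v i false) with hSdef
  have hkn : S.card ≤ n := by
    simpa using S.card_le_univ
  have h2k : n + 2 ≤ 2 * S.card := by omega
  have hne : S.Nonempty := Finset.card_pos.mp (by omega)
  obtain ⟨i, hi⟩ := hne
  have hi' := Finset.mem_filter.mp hi
  have hgapM : ∀ j : Fin n, v j true - v j false < M := by
    intro j
    have h1 := (hv j true).2
    have h2 := (hv j false).1
    simp only [Set.mem_Ioo] at *
    linarith [(hv j true).2, (hv j false).1]
  have hgapM' : ∀ j : Fin n, -M ≤ v j true - v j false := by
    intro j
    have h1 := (hv j true).1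
    have h2 := (hv j false).2
    simp only [Set.mem_Ioo] at *
    linarith
  have hsplit : ∀ b, ∑ j, v j b = v i b + ∑ j ∈ Finset.univ.erase i, v j b := by
    intro b; rw [← Finset.add_sum_erase _ _ (Finset.mem_univ i)]
  -- D := total welfare gap
  have hD0 : 0 ≤ ∑ j, v j true - ∑ j, v j false := sub_nonneg.mpr hEff
  have hDM : ∑ j, v j true - ∑ j, v j false < M := by
    have hp := hi'.2.1
    have hg := hgapM i
    have h1 := hsplit true
    have h2 := hsplit false
    linarith
  -- lower bound on sum over S
  have h1 : (S.card : ℝ) * (M - ε) < ∑ j ∈ S, (v j true - v j false) := by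
    have := Finset.sum_lt_sum_of_nonempty ⟨i, hi⟩
      (f := fun _ : Fin n => M - ε) (g := fun j => v j true - v j false)
      (fun j hj => (Finset.mem_filter.mp hj).2.2)
    simp [mul_comm] at this
    rw [Finset.sum_sub_distrib]
    linarith
  -- lower bound on sum over complement
  have h2 : -((Sᶜ.card : ℝ) * M) ≤ ∑ j ∈ Sᶜ, (v j true - v j false) := by
    calc -((Sᶜ.card : ℝ) * M) = ∑ _j ∈ Sᶜ, (-M) := by
          simp [mul_comm]
      _ ≤ ∑ j ∈ Sᶜ, (v j true - v j false) :=
          Finset.sum_le_sum (fun j _ => hgapM' j)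
  have hsum : ∑ j ∈ S, (v j true - v j false) + ∑ j ∈ Sᶜ, (v j true - v j false)
      = ∑ j, v j true - ∑ j, v j false := by
    rw [Finset.sum_add_sum_compl]
    rw [Finset.sum_sub_distrib]
  have hcompl : (Sᶜ.card : ℝ) = (n : ℝ) - (S.card : ℝ) := by
    have : Sᶜ.card = n - S.card := by
      rw [Finset.card_compl]; simp
    rw [this, Nat.cast_sub hkn]
  have hkε : (S.card : ℝ) * ε < M := by
    have hkn' : (S.card : ℝ) ≤ (n : ℝ) := Nat.cast_le.mpr hkn
    have h3 : ε * ((n : ℝ) + 1) < M := by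
      rw [div_eq_mul_inv] at hεM
      have hn1 : (0:ℝ) < (n : ℝ) + 1 := by positivity
      calc ε * ((n:ℝ)+1) < (M * ((n:ℝ)+1)⁻¹) * ((n:ℝ)+1) := by
            exact mul_lt_mul_of_pos_right hεM hn1
        _ = M := by field_simp
    nlinarith
  have h2k' : (n : ℝ) + 2 ≤ 2 * (S.card : ℝ) := by
    have : ((n + 2 : ℕ) : ℝ) ≤ ((2 * S.card : ℕ) : ℝ) := Nat.cast_le.mpr h2k
    push_cast at this
    linarith
  -- combine
  nlinarith [h1, h2, hsum, hDM, hcompl, hkε, h2k', hM.le,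
    mul_le_mul_of_nonneg_right h2k' hM.le]
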